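/- Let K be a field of characteristic 0, let d ≥ 3 and let n be an integer with 0 ≤ n < d/3. Let R = K[γ₁,…,γ₉, b_{iν} : 1 ≤ i ≤ d+1, ν ∈ Δ] be the polynomial ring over K in the 9 + (d+1)·|Δ| indicated variables. For 1 ≤ i ≤ d+1 let γ(f_i) ∈ R[x,y,z] be the polynomial obtained from f_i = Σ_{ν∈Δ} b_{iν} x^{ν₁}y^{ν₂}z^{ν₃} by substituting x ↦ γ₁x+γ₂y+γ₃z, y ↦ γ₄x+γ₅y+γ₆z, z ↦ γ₇x+γ₈y+γ₉z. Fix an ordering of the d+1 exponent vectors in J(n) and let B_{J(n)} be the (d+1)×(d+1) matrix over R whose (i,j) entry is the coefficient in γ(f_i) of the monomial with the j-th exponent vector of J(n). Then det(B_{J(n)}) is a nonzero element of R. -/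

import Mathlib

open MvPolynomial

/-- The set `Δ` of exponent vectors of degree-`d` monomials in three
variables, as a finset of `Fin 3 → ℕ`. -/
def DeltaF (d : ℕ) : Finset (Fin 3 → ℕ) :=
  (Fintype.piFinset fun _ => Finset.range (d + 1)).filter
    fun ν => ν 0 + ν 1 + ν 2 = d

/-- The index type for the `9 + (d+1)·|Δ|` variables of the ring `R`:
the nine variables `γ₁, …, γ₉` together with the variables `b_{iν}` for
`1 ≤ i ≤ d+1`, `ν ∈ Δ`. -/
def Var (d : ℕ) : Type :=
  Fin 9 ⊕ (Fin (d + 1) × {ν : Fin 3 → ℕ // ν ∈ DeltaF d})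

/-- The image of the `r`-th of the variables `x, y, z` under the generic
coordinate change `γ`; e.g. `x ↦ γ₁x + γ₂y + γ₃z`.  The coefficients are
the variables `γ₁, …, γ₉` of `R`. -/
noncomputable def gammaLin (K : Type*) [CommSemiring K] (d : ℕ) (r : Fin 3) :
    MvPolynomial (Fin 3) (MvPolynomial (Var d) K) :=
  ∑ c : Fin 3,
    C (X (Sum.inl (⟨3 * r.val + c.val, by
      have hr := r.isLt; have hc := c.isLt; omega⟩ : Fin 9))) * X c

/-- `γ(f_i)`, the polynomial obtained from
`f_i = Σ_{ν ∈ Δ} b_{iν} x^{ν₁} y^{ν₂} z^{ν₃}` by substituting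
`x ↦ γ₁x+γ₂y+γ₃z`, `y ↦ γ₄x+γ₅y+γ₆z`, `z ↦ γ₇x+γ₈y+γ₉z`. -/
noncomputable def gammaF (K : Type*) [CommSemiring K] (d : ℕ)
    (i : Fin (d + 1)) : MvPolynomial (Fin 3) (MvPolynomial (Var d) K) :=
  ∑ ν ∈ (DeltaF d).attach,
    C (X (Sum.inr (i, ν))) *
      (gammaLin K d 0 ^ ν.1 0 * gammaLin K d 1 ^ ν.1 1 *
        gammaLin K d 2 ^ ν.1 2)

/-- A fixed ordering of the `d+1` exponent vectors of
`J(n) = {(d−a−1, a, 1) : 0 ≤ a ≤ n−1} ∪ {(d−b, b, 0) : 0 ≤ b ≤ d−n}`: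
first `(d−b, b, 0)` for `b = 0, …, d−n`, then `(d−1−a, a, 1)` for
`a = 0, …, n−1`. -/
def ordJn (d n : ℕ) (j : Fin (d + 1)) : Fin 3 → ℕ :=
  if j.val < d - n + 1 then ![d - j.val, j.val, 0]
  else ![d - 1 - (j.val - (d - n + 1)), j.val - (d - n + 1), 1]

lemma ordJn_mem (d n : ℕ) (hn : 3 * n < d) (j : Fin (d + 1)) :
    ordJn d n j ∈ DeltaF d := by
  have hj := j.isLt
  simp only [DeltaF, Finset.mem_filter, Fintype.mem_piFinset, Finset.mem_range]
  unfold ordJn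
  split <;> rename_i h <;>
    exact ⟨fun i => by fin_cases i <;> simp <;> omega, by simp <;> omega⟩

lemma ordJn_inj (d n : ℕ) : Function.Injective (ordJn d n) := by
  intro i j hij
  have h1 := congrFun hij 1
  have h2 := congrFun hij 2
  have hi := i.isLt; have hj := j.isLt
  unfold ordJn at h1 h2
  ext
  by_cases ci : i.val < d - n + 1 <;> by_cases cj : j.val < d - n + 1 <;>
    simp only [ci, cj, if_pos, if_neg, not_false_iff] at h1 h2 <;>
    simp only [Matrix.cons_val_one, Matrix.head_cons, Matrix.cons_val_two,
      Matrix.tail_cons, Matrix.cons_val_zero] at h1 h2 <;> omega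

/-- Folded injections into `Var d`. -/
def mkg (d : ℕ) (g : Fin 9) : Var d := Sum.inl g

def mkb (d : ℕ) (p : Fin (d + 1) × {ν : Fin 3 → ℕ // ν ∈ DeltaF d}) : Var d :=
  Sum.inr p

/-- Specialization: γ to identity, `b_{iν}` to Kronecker delta. -/
noncomputable def specV (K : Type*) [CommSemiring K] (d n : ℕ) : Var d → K :=
  fun w => match w with
  | Sum.inl g => if g.val = 0 ∨ g.val = 4 ∨ g.val = 8 then 1 else 0
  | Sum.inr p => if p.2.1 = ordJn d n p.1 then 1 else 0

lemma gammaLin_eq (K : Type*) [CommSemiring K] (d : ℕ) (r : Fin 3) :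
    gammaLin K d r = ∑ c : Fin 3,
      C (X (mkg d (⟨3 * r.val + c.val, by
        have hr := r.isLt; have hc := c.isLt; omega⟩ : Fin 9))) * X c := rfl

lemma gammaF_eq (K : Type*) [CommSemiring K] (d : ℕ) (i : Fin (d + 1)) :
    gammaF K d i = ∑ ν ∈ (DeltaF d).attach,
      C (X (mkb d (i, ν))) *
        (gammaLin K d 0 ^ ν.1 0 * gammaLin K d 1 ^ ν.1 1 *
          gammaLin K d 2 ^ ν.1 2) := rfl

lemma eval_mkg (K : Type*) [CommSemiring K] (d n : ℕ) (g : Fin 9) :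
    eval (specV K d n) (X (mkg d g)) =
      if g.val = 0 ∨ g.val = 4 ∨ g.val = 8 then 1 else 0 := by
  rw [eval_X]; rfl

lemma eval_mkb (K : Type*) [CommSemiring K] (d n : ℕ)
    (p : Fin (d + 1) × {ν : Fin 3 → ℕ // ν ∈ DeltaF d}) :
    eval (specV K d n) (X (mkb d p)) =
      if p.2.1 = ordJn d n p.1 then 1 else 0 := by
  rw [eval_X]; rfl

lemma map_gammaLin (K : Type*) [CommSemiring K] (d n : ℕ) (r : Fin 3) :
    MvPolynomial.map (eval (specV K d n)) (gammaLin K d r) = X r := by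
  rw [gammaLin_eq, map_sum, Fin.sum_univ_three, map_mul, map_mul, map_mul,
    MvPolynomial.map_C, MvPolynomial.map_C, MvPolynomial.map_C,
    MvPolynomial.map_X, MvPolynomial.map_X, MvPolynomial.map_X,
    eval_mkg, eval_mkg, eval_mkg]
  fin_cases r <;> simp <;> norm_num

lemma prod_X_pow {K : Type*} [CommSemiring K] (ν : Fin 3 → ℕ) :
    (X 0 : MvPolynomial (Fin 3) K) ^ ν 0 * X 1 ^ ν 1 * X 2 ^ ν 2 =
      monomial (Finsupp.equivFunOnFinite.symm ν) 1 := by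
  have hs : Finsupp.single (0 : Fin 3) (ν 0) + Finsupp.single 1 (ν 1) +
      Finsupp.single 2 (ν 2) = Finsupp.equivFunOnFinite.symm ν := by
    ext a
    fin_cases a <;>
      simp [Finsupp.single_apply, Finsupp.coe_equivFunOnFinite_symm]
  rw [X_pow_eq_monomial, X_pow_eq_monomial, X_pow_eq_monomial,
    monomial_mul, monomial_mul, hs]
  simp

lemma map_gammaF (K : Type*) [CommSemiring K] (d n : ℕ) (hn : 3 * n < d)
    (i : Fin (d + 1)) :
    MvPolynomial.map (eval (specV K d n)) (gammaF K d i) =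
      monomial (Finsupp.equivFunOnFinite.symm (ordJn d n i)) 1 := by
  rw [gammaF_eq, map_sum]
  have key : ∀ ν ∈ (DeltaF d).attach,
      MvPolynomial.map (eval (specV K d n))
        (C (X (mkb d (i, ν))) *
          (gammaLin K d 0 ^ ν.1 0 * gammaLin K d 1 ^ ν.1 1 *
            gammaLin K d 2 ^ ν.1 2)) =
      if ν = (⟨ordJn d n i, ordJn_mem d n hn i⟩ : {ν // ν ∈ DeltaF d}) then
        monomial (Finsupp.equivFunOnFinite.symm ν.1) 1 else 0 := by
    intro ν _
    rw [map_mul, MvPolynomial.map_C, eval_mkb, map_mul, map_mul, map_pow,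
      map_pow, map_pow, map_gammaLin, map_gammaLin, map_gammaLin, _root_.prod_X_pow]
    by_cases hν : ν = (⟨ordJn d n i, ordJn_mem d n hn i⟩ : {ν // ν ∈ DeltaF d})
    · subst hν; simp
    · rw [if_neg hν, if_neg (fun hc => hν (Subtype.ext hc)), map_zero, zero_mul]
  rw [Finset.sum_congr rfl key, Finset.sum_ite_eq' (DeltaF d).attach]
  simp

/-- Let `K` be a field of characteristic `0`, `d ≥ 3` and `0 ≤ n < d/3`.
The `(d+1) × (d+1)` matrix `B_{J(n)}` over
`R = K[γ₁,…,γ₉, b_{iν} : 1 ≤ i ≤ d+1, ν ∈ Δ]` whose `(i,j)` entry is the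
coefficient in `γ(f_i)` of the monomial with the `j`-th exponent vector of
`J(n)` has nonzero determinant in `R`. -/
theorem det_BJn_ne_zero (K : Type*) [Field K] [CharZero K]
    (d n : ℕ) (hd : 3 ≤ d) (hn : 3 * n < d) :
    (Matrix.of fun i j : Fin (d + 1) =>
      MvPolynomial.coeff (Finsupp.equivFunOnFinite.symm (ordJn d n j))
        (gammaF K d i)).det ≠ 0 := by
  intro h
  have h2 := congrArg (eval (specV K d n)) h
  rw [map_zero, RingHom.map_det, RingHom.mapMatrix_apply] at h2
  have key : (Matrix.of fun i j : Fin (d + 1) =>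
      MvPolynomial.coeff (Finsupp.equivFunOnFinite.symm (ordJn d n j))
        (gammaF K d i)).map (eval (specV K d n)) = 1 := by
    ext i j
    simp only [Matrix.map_apply, Matrix.of_apply, Matrix.one_apply]
    rw [← coeff_map, map_gammaF K d n hn, coeff_monomial]
    by_cases hij : i = j
    · subst hij; simp
    · rw [if_neg hij, if_neg]
      intro hc
      exact hij (ordJn_inj d n (Finsupp.equivFunOnFinite.symm.injective hc))
  rw [key, Matrix.det_one] at h2
  exact one_ne_zero h2
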